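/- Let (k_j)_{j∈ℕ} be a sequence of positive reals with ∑_{j∈ℕ} k_j^n = ∞, and let K_j = k_j·[0,1)^n ⊂ ℝ^n. Then there exist vectors τ_j ∈ ℝ^n such that ℝ^n = ⋃_{j∈ℕ} (τ_j + K_j). -/

import Mathlib

open Finset

namespace CubesAux

def ofs (r d : ℕ) : ℕ := r / 2 ^ d % 2

def enc {n : ℕ} (g : Fin n → Bool) : ℕ := ∑ d : Fin n, if g d then 2 ^ (d : ℕ) else 0

lemma enc_succ {n : ℕ} (g : Fin (n + 1) → Bool) :
    enc g = (if g 0 then 1 else 0) + 2 * enc (fun d => g d.succ) := by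
  rw [enc, Fin.sum_univ_succ]
  simp only [enc, Finset.mul_sum, Fin.val_succ, Fin.val_zero, pow_zero]
  congr 1
  exact Finset.sum_congr rfl fun d _ => by split <;> (rename_i h; simp [h, pow_succ]) <;> ring

lemma enc_lt {n : ℕ} (g : Fin n → Bool) : enc g < 2 ^ n := by
  induction n with
  | zero => simp [enc]
  | succ n ih =>
    rw [enc_succ]
    have := ih (fun d => g d.succ)
    have h0 : (if g 0 then 1 else 0) ≤ 1 := by split <;> simp
    calc (if g 0 then 1 else 0) + 2 * enc (fun d => g d.succ) ≤ 1 + 2 * enc (fun d => g d.succ) := by omega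
    _ < 2 ^ (n + 1) := by rw [pow_succ]; omega

lemma ofs_enc {n : ℕ} (g : Fin n → Bool) (d : Fin n) :
    ofs (enc g) (d : ℕ) = if g d then 1 else 0 := by
  induction n with
  | zero => exact absurd d.2 (by omega)
  | succ n ih =>
    rw [enc_succ]
    rcases Fin.eq_zero_or_eq_succ d with h | ⟨d', rfl⟩
    · subst h
      simp only [ofs, Fin.val_zero, pow_zero, Nat.div_one]
      split <;> omega
    · have : ((d'.succ : Fin (n+1)) : ℕ) = (d' : ℕ) + 1 := rfl
      rw [this]
      have hofs : ∀ m b, b ≤ 1 → ofs (b + 2 * m) ((d' : ℕ) + 1) = ofs m (d' : ℕ) := by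
        intro m b hb
        simp only [ofs, pow_succ]
        rw [show 2 ^ (d' : ℕ) * 2 = 2 * 2 ^ (d' : ℕ) by ring,
          ← Nat.div_div_eq_div_mul]
        congr 2
        omega
      rw [hofs _ _ (by split <;> simp), ih (fun d => g d.succ) d']


variable (n : ℕ) (e : ℕ → Fin n → ℤ)

/-- Corner of the dyadic cell number `i` at scale `s` (side length `2⁻ˢ`). -/
noncomputable def corner : ℕ → ℕ → Fin n → ℝ
  | 0, i, d => (e i d : ℝ)
  | s + 1, i, d => corner s (i / 2 ^ n) d + ((2 : ℝ) ^ (s + 1))⁻¹ * (ofs (i % 2 ^ n) (d : ℕ) : ℝ)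

lemma corner_zero (i : ℕ) (d : Fin n) : corner n e 0 i d = (e i d : ℝ) := rfl

lemma corner_succ (s i : ℕ) (d : Fin n) :
    corner n e (s + 1) i d
      = corner n e s (i / 2 ^ n) d + ((2 : ℝ) ^ (s + 1))⁻¹ * (ofs (i % 2 ^ n) (d : ℕ) : ℝ) := rfl

/-- Membership in the dyadic cell number `i` at scale `s`. -/
def memCell (s i : ℕ) (x : Fin n → ℝ) : Prop :=
  ∀ d, corner n e s i d ≤ x d ∧ x d < corner n e s i d + ((2 : ℝ) ^ s)⁻¹

lemma memCell_zero (he : Function.Surjective e) (x : Fin n → ℝ) :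
    ∃ T, memCell n e 0 T x := by
  obtain ⟨T, hT⟩ := he (fun d => ⌊x d⌋)
  refine ⟨T, fun d => ?_⟩
  have h1 : e T d = ⌊x d⌋ := by rw [hT]
  constructor
  · rw [corner_zero, h1]; exact Int.floor_le (x d)
  · rw [corner_zero, h1, pow_zero, inv_one]
    have := Int.lt_floor_add_one (x d)
    push_cast at this ⊢
    linarith

lemma memCell_split {s i : ℕ} {x : Fin n → ℝ} (h : memCell n e s i x) :
    ∃ r, r < 2 ^ n ∧ memCell n e (s + 1) (2 ^ n * i + r) x := by
  classical
  set g : Fin n → Bool := fun d => decide (corner n e s i d + ((2 : ℝ) ^ (s + 1))⁻¹ ≤ x d) with hg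
  refine ⟨enc g, enc_lt g, fun d => ?_⟩
  have hdiv : (2 ^ n * i + enc g) / 2 ^ n = i := by
    rw [Nat.mul_add_div (by positivity), Nat.div_eq_of_lt (enc_lt g), add_zero]
  have hmod : (2 ^ n * i + enc g) % 2 ^ n = enc g := by
    rw [Nat.mul_add_mod, Nat.mod_eq_of_lt (enc_lt g)]
  have hc : corner n e (s + 1) (2 ^ n * i + enc g) d
      = corner n e s i d + ((2 : ℝ) ^ (s + 1))⁻¹ * (ofs (enc g) (d : ℕ) : ℝ) := by
    rw [corner_succ, hdiv, hmod]
  rw [hc, ofs_enc g d]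
  have hhalf : ((2 : ℝ) ^ (s + 1))⁻¹ + ((2 : ℝ) ^ (s + 1))⁻¹ = ((2 : ℝ) ^ s)⁻¹ := by
    rw [pow_succ]
    field_simp
    ring
  have hlo := (h d).1
  have hhi := (h d).2
  by_cases hx : corner n e s i d + ((2 : ℝ) ^ (s + 1))⁻¹ ≤ x d
  · simp only [hg, hx, decide_true, if_pos]
    constructor
    · simpa using hx
    · push_cast; linarith
  · simp only [hg, hx, decide_false, if_neg]
    constructor
    · push_cast; linarith
    · push_cast
      have : ((2:ℝ)^(s+1))⁻¹ > 0 := by positivity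
      linarith [not_le.mp hx]

lemma memCell_exists (he : Function.Surjective e) (s : ℕ) (x : Fin n → ℝ) :
    ∃ i, memCell n e s i x := by
  induction s with
  | zero => exact memCell_zero n e he x
  | succ s ih =>
    obtain ⟨i, hi⟩ := ih
    obtain ⟨r, _, hr⟩ := memCell_split n e hi
    exact ⟨_, hr⟩

lemma chain (he : Function.Surjective e) (x : Fin n → ℝ) :
    ∃ c : ℕ → ℕ, (∀ s, memCell n e s (c s) x) ∧ (∀ s, 2 ^ n * c s ≤ c (s + 1)) ∧
      (∀ s, c s < (c 0 + 1) * 2 ^ (s * n)) := by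
  classical
  obtain ⟨T, hT⟩ := memCell_zero n e he x
  let F : ∀ s : ℕ, {i : ℕ // memCell n e s i x} := fun s =>
    Nat.rec (motive := fun s => {i : ℕ // memCell n e s i x}) ⟨T, hT⟩
      (fun s p =>
        ⟨2 ^ n * p.1 + Classical.choose (memCell_split n e p.2),
          (Classical.choose_spec (memCell_split n e p.2)).2⟩) s
  have hFs : ∀ s, (F (s + 1)).1 = 2 ^ n * (F s).1 + Classical.choose (memCell_split n e (F s).2) :=
    fun s => rfl
  refine ⟨fun s => (F s).1, fun s => (F s).2, fun s => ?_, fun s => ?_⟩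
  · show 2 ^ n * (F s).1 ≤ (F (s + 1)).1
    rw [hFs]; omega
  · show (F s).1 < ((F 0).1 + 1) * 2 ^ (s * n)
    induction s with
    | zero => simp
    | succ s ih =>
      have hrlt := (Classical.choose_spec (memCell_split n e (F s).2)).1
      have h1 : (F (s + 1)).1 < 2 ^ n * ((F s).1 + 1) := by
        rw [hFs, Nat.mul_add, Nat.mul_one]; omega
      have h2 : (F s).1 + 1 ≤ ((F 0).1 + 1) * 2 ^ (s * n) := ih
      calc (F (s + 1)).1 < 2 ^ n * ((F s).1 + 1) := h1
        _ ≤ 2 ^ n * (((F 0).1 + 1) * 2 ^ (s * n)) := Nat.mul_le_mul_left _ h2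
        _ = ((F 0).1 + 1) * 2 ^ ((s + 1) * n) := by
            rw [show (s + 1) * n = s * n + n by ring, pow_add]; ring

end CubesAux

open CubesAux in
/-- Lemma 4.6 (cubes): cubes of infinite total volume can be translated to cover ℝⁿ. -/
theorem stmt_1 (n : ℕ) (k : ℕ → ℝ) (hk : ∀ j, 0 < k j)
    (hdiv : ¬ Summable (fun j => (k j) ^ n)) :
    ∃ τ : ℕ → (Fin n → ℝ),
      (⋃ j, (fun x => τ j + x) '' {x : Fin n → ℝ | ∀ i, x i ∈ Set.Ico 0 (k j)})
        = Set.univ := by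
  classical
  obtain ⟨e, he⟩ := exists_surjective_nat (Fin n → ℤ)
  -- the dyadic class of each cube
  have hmex : ∀ j, ∃ m : ℕ, ((2 : ℝ) ^ (m + 1))⁻¹ < k j := by
    intro j
    obtain ⟨m, hm⟩ := pow_unbounded_of_one_lt (R := ℝ) (k j)⁻¹ one_lt_two
    refine ⟨m, ?_⟩
    have h2 : (k j)⁻¹ < 2 ^ (m + 1) :=
      lt_of_lt_of_le hm (pow_le_pow_right₀ one_le_two (Nat.le_succ m))
    have := inv_strictAnti₀ (inv_pos.2 (hk j)) h2
    simpa [inv_inv] using this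
  set mcls : ℕ → ℕ := fun j => Nat.find (hmex j) with hmcls
  have hm1 : ∀ j, ((2 : ℝ) ^ (mcls j + 1))⁻¹ < k j := fun j => Nat.find_spec (hmex j)
  have hm2 : ∀ j m, mcls j = m + 1 → k j ≤ ((2 : ℝ) ^ (m + 1))⁻¹ := by
    intro j m h
    have hlt : m < mcls j := by omega
    exact not_lt.mp (Nat.find_min (hmex j) hlt)
  -- it suffices to cover every point
  suffices h : ∃ τ : ℕ → Fin n → ℝ, ∀ y : Fin n → ℝ, ∃ j, ∀ d, τ j d ≤ y d ∧ y d < τ j d + k j by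
    obtain ⟨τ, hτ⟩ := h
    refine ⟨τ, Set.eq_univ_of_forall fun y => ?_⟩
    obtain ⟨j, hj⟩ := hτ y
    refine Set.mem_iUnion.2 ⟨j, ⟨fun d => y d - τ j d, fun d =>
      ⟨show (0:ℝ) ≤ y d - τ j d by linarith [(hj d).1],
       show y d - τ j d < k j by linarith [(hj d).2]⟩, ?_⟩⟩
    funext d
    simp
  -- it suffices to assign to each cube a dyadic cell of its scale, covering every point
  suffices h : ∃ σ : ℕ → ℕ, ∀ x : Fin n → ℝ, ∃ j, memCell n e (mcls j + 1) (σ j) x by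
    obtain ⟨σ, hσ⟩ := h
    refine ⟨fun j => corner n e (mcls j + 1) (σ j), fun y => ?_⟩
    obtain ⟨j, hj⟩ := hσ y
    refine ⟨j, fun d => ⟨(hj d).1, lt_of_lt_of_le (hj d).2 ?_⟩⟩
    have := hm1 j
    linarith [(hj d).2]
  by_cases hinf : ∃ m, {j | mcls j = m}.Infinite
  · -- some class is infinite: it alone covers ℝⁿ
    obtain ⟨m, hm⟩ := hinf
    let f := hm.natEmbedding
    refine ⟨fun j => if h : ∃ i, ((f i : ℕ) = j) then h.choose else 0, fun x => ?_⟩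
    obtain ⟨i, hi⟩ := memCell_exists n e he (m + 1) x
    refine ⟨(f i : ℕ), ?_⟩
    have hcls : mcls (f i : ℕ) = m := (f i).2
    have hex : ∃ i', ((f i' : ℕ) = ((f i : ℕ) : ℕ)) := ⟨i, rfl⟩
    have hch : hex.choose = i := f.injective (Subtype.ext hex.choose_spec)
    show memCell n e (mcls (f i : ℕ) + 1)
      (if h : ∃ i', ((f i' : ℕ) = ((f i : ℕ) : ℕ)) then h.choose else 0) x
    rw [dif_pos hex, hch, hcls]
    exact hi
  · -- all classes are finite
    push_neg at hinf
    have hfin : ∀ m, {j | mcls j = m}.Finite := fun m => hinf m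
    set S : ℕ → Finset ℕ := fun m => (hfin m).toFinset with hS
    set N : ℕ → ℕ := fun m => (S m).card with hNdef
    have hmemS : ∀ m j, j ∈ S m ↔ mcls j = m := by
      intro m j; simp [hS, Set.Finite.mem_toFinset]
    set C' : ℕ → ℕ := fun m => Nat.rec 0 (fun m c => 2 ^ n * (c + N m)) m with hC'
    have hC'0 : C' 0 = 0 := rfl
    have hC's : ∀ m, C' (m + 1) = 2 ^ n * (C' m + N m) := fun _ => rfl
    set rk : ℕ → ℕ → ℕ := fun m j => ((S m).filter (· < j)).card with hrkdef
    -- rank is injective and bounded on each class, hence surjective onto `range (N m)`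
    have hrklt : ∀ m j, j ∈ S m → rk m j < N m := by
      intro m j hj
      apply Finset.card_lt_card
      rw [Finset.ssubset_iff_of_subset (Finset.filter_subset _ _)]
      exact ⟨j, hj, by simp⟩
    have hrkmono : ∀ m j1 j2, j1 ∈ S m → j1 < j2 → rk m j1 < rk m j2 := by
      intro m j1 j2 h1 hlt
      apply Finset.card_lt_card
      rw [Finset.ssubset_iff_of_subset]
      · exact ⟨j1, by simp [Finset.mem_filter, h1, hlt], by simp⟩
      · intro a ha
        simp only [Finset.mem_filter] at ha ⊢
        exact ⟨ha.1, by omega⟩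
    have hrksurj : ∀ m r, r < N m → ∃ j, mcls j = m ∧ rk m j = r := by
      intro m r hr
      have hinj : Set.InjOn (rk m) (S m) := by
        intro j1 h1 j2 h2 heq
        by_contra hne
        rcases lt_or_gt_of_ne hne with h | h
        · exact absurd heq (ne_of_lt (hrkmono m j1 j2 h1 h))
        · exact absurd heq.symm (ne_of_lt (hrkmono m j2 j1 h2 h))
      have himg : (S m).image (rk m) = Finset.range (N m) := by
        apply Finset.eq_of_subset_of_card_le
        · intro r' hr'
          obtain ⟨j, hj, rfl⟩ := Finset.mem_image.1 hr'
          exact Finset.mem_range.2 (hrklt m j hj)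
        · rw [Finset.card_range, Finset.card_image_of_injOn hinj]
      have : r ∈ (S m).image (rk m) := by rw [himg]; exact Finset.mem_range.2 hr
      obtain ⟨j, hj, hjr⟩ := Finset.mem_image.1 this
      exact ⟨j, (hmemS m j).1 hj, hjr⟩
    -- divergence of the class volumes
    have hvdiv : ¬ Summable (fun j => ((2 : ℝ) ^ ((mcls j + 1) * n))⁻¹) := by
      intro hsum
      apply hdiv
      have h2 : Summable (fun j => (2 : ℝ) ^ n * ((2 : ℝ) ^ ((mcls j + 1) * n))⁻¹) :=
        hsum.mul_left _
      have hg : Summable (fun j => if mcls j = 0 then 0 else k j ^ n) := by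
        apply Summable.of_nonneg_of_le _ _ h2
        · intro j
          split
          · exact le_rfl
          · exact pow_nonneg (hk j).le n
        · intro j
          by_cases h0 : mcls j = 0
          · simp only [h0, if_pos]
            positivity
          · simp only [h0, if_neg, Ne, not_false_iff]
            obtain ⟨m', hm'⟩ : ∃ m', mcls j = m' + 1 := ⟨mcls j - 1, by omega⟩
            have hle := hm2 j m' hm'
            have h3 : k j ^ n ≤ (((2 : ℝ) ^ (m' + 1))⁻¹) ^ n :=
              pow_le_pow_left₀ (hk j).le hle n
            have h4 : (((2 : ℝ) ^ (m' + 1))⁻¹) ^ n = ((2 : ℝ) ^ ((m' + 1) * n))⁻¹ := by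
              rw [inv_pow, ← pow_mul]
            have h5 : (2 : ℝ) ^ ((mcls j + 1) * n) = 2 ^ ((m' + 1) * n) * 2 ^ n := by
              rw [hm', ← pow_add]
              congr 1
              ring
            rw [h5]
            rw [mul_inv]
            have h6 : (0:ℝ) < (2:ℝ) ^ ((m' + 1) * n) := by positivity
            have h7 : (2:ℝ) ^ n * (((2:ℝ) ^ ((m' + 1) * n))⁻¹ * ((2:ℝ) ^ n)⁻¹)
                = ((2:ℝ) ^ ((m' + 1) * n))⁻¹ := by
              field_simp
            rw [h7]
            rw [h4] at h3
            exact h3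
      have hf0 : Summable (fun j => if mcls j = 0 then k j ^ n else 0) := by
        apply summable_of_finite_support
        apply Set.Finite.subset (hfin 0)
        intro j hj
        simp only [Function.mem_support] at hj
        by_contra h0
        simp only [Set.mem_setOf_eq] at h0
        simp [h0] at hj
      have := (hg.add hf0).congr (g := fun j => k j ^ n) ?_
      · exact this
      · intro j
        by_cases h0 : mcls j = 0 <;> simp [h0]
    refine ⟨fun j => C' (mcls j) + rk (mcls j) j, fun x => ?_⟩
    -- the chain of dyadic cells containing x
    obtain ⟨c, hcmem, hclow, hcup⟩ := chain n e he x
    -- find a scale with enough accumulated volume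
    have hex : ∃ s, c (s + 1) < C' s + N s := by
      have hnonneg : ∀ j, 0 ≤ ((2 : ℝ) ^ ((mcls j + 1) * n))⁻¹ := fun j => by positivity
      have htend := (not_summable_iff_tendsto_nat_atTop_of_nonneg hnonneg).1 hvdiv
      obtain ⟨J, hJ⟩ := (htend.eventually_gt_atTop ((c 0 + 1 : ℕ) : ℝ)).exists
      set M := (Finset.range J).sup mcls with hM
      have hmap : ∀ j ∈ Finset.range J, mcls j ∈ Finset.range (M + 1) := by
        intro j hj
        exact Finset.mem_range.2 (Nat.lt_succ_of_le (Finset.le_sup hj))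
      have hgroup : ∑ j ∈ Finset.range J, ((2 : ℝ) ^ ((mcls j + 1) * n))⁻¹
          ≤ ∑ m' ∈ Finset.range (M + 1), (N m' : ℝ) * ((2 : ℝ) ^ ((m' + 1) * n))⁻¹ := by
        rw [← Finset.sum_fiberwise_of_maps_to hmap]
        apply Finset.sum_le_sum
        intro m' _
        have heq : ∑ j ∈ (Finset.range J).filter (fun j => mcls j = m'),
            ((2 : ℝ) ^ ((mcls j + 1) * n))⁻¹
            = (((Finset.range J).filter (fun j => mcls j = m')).card : ℝ)
              * ((2 : ℝ) ^ ((m' + 1) * n))⁻¹ := by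
          rw [Finset.sum_congr rfl (fun j hj => by
            rw [(Finset.mem_filter.1 hj).2]), Finset.sum_const, nsmul_eq_mul]
        rw [heq]
        have hcard : ((Finset.range J).filter (fun j => mcls j = m')).card ≤ N m' := by
          apply Finset.card_le_card
          intro j hj
          exact (hmemS m' j).2 (Finset.mem_filter.1 hj).2
        exact mul_le_mul_of_nonneg_right (Nat.cast_le.2 hcard) (by positivity)
      have hCsum : ∀ m0 : ℕ, ((C' m0 + N m0 : ℕ) : ℝ) * ((2 : ℝ) ^ ((m0 + 1) * n))⁻¹
          = ∑ m' ∈ Finset.range (m0 + 1), (N m' : ℝ) * ((2 : ℝ) ^ ((m' + 1) * n))⁻¹ := by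
        intro m0
        induction m0 with
        | zero => simp [hC'0]
        | succ m0 ih =>
          rw [Finset.sum_range_succ, ← ih, hC's]
          have hexp : (2 : ℝ) ^ ((m0 + 1 + 1) * n) = 2 ^ ((m0 + 1) * n) * 2 ^ n := by
            rw [← pow_add]; congr 1; ring
          rw [hexp]
          push_cast
          have h6 : (0:ℝ) < (2:ℝ) ^ ((m0 + 1) * n) := by positivity
          field_simp
      have hMlt : ((c 0 + 1 : ℕ) : ℝ)
          < ((C' M + N M : ℕ) : ℝ) * ((2 : ℝ) ^ ((M + 1) * n))⁻¹ := by
        rw [hCsum M]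
        exact lt_of_lt_of_le hJ hgroup
      have hreal : ((c 0 + 1 : ℕ) : ℝ) * (2 : ℝ) ^ ((M + 1) * n) < ((C' M + N M : ℕ) : ℝ) := by
        have h6 : (0:ℝ) < (2:ℝ) ^ ((M + 1) * n) := by positivity
        rw [← lt_div_iff₀ h6] at *
        rw [div_eq_mul_inv]
        exact hMlt
      have hnat : (c 0 + 1) * 2 ^ ((M + 1) * n) < C' M + N M := by
        exact_mod_cast hreal
      exact ⟨M, lt_trans (hcup (M + 1)) hnat⟩
    obtain ⟨m, hfind, hmin⟩ : ∃ m, (c (m + 1) < C' m + N m) ∧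
        ∀ m' < m, ¬(c (m' + 1) < C' m' + N m') :=
      ⟨Nat.find hex, Nat.find_spec hex, fun m' h => Nat.find_min hex h⟩
    have hlow : C' m ≤ c (m + 1) := by
      cases m with
      | zero => simp [hC'0]
      | succ m' =>
        have h1 : C' m' + N m' ≤ c (m' + 1) := not_lt.mp (hmin m' (by omega))
        calc C' (m' + 1) = 2 ^ n * (C' m' + N m') := hC's m'
          _ ≤ 2 ^ n * c (m' + 1) := Nat.mul_le_mul_left _ h1
          _ ≤ c (m' + 1 + 1) := hclow (m' + 1)
    obtain ⟨j, hj1, hj2⟩ := hrksurj m (c (m + 1) - C' m) (by omega)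
    refine ⟨j, ?_⟩
    have hval : C' (mcls j) + rk (mcls j) j = c (m + 1) := by
      rw [hj1, hj2]; omega
    show memCell n e (mcls j + 1) (C' (mcls j) + rk (mcls j) j) x
    rw [hval, hj1]
    exact hcmem (m + 1)
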